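/- For every countable linear order X, there exists an order automorphism φ of ℚ such that the fixed-point set {q ∈ ℚ : φ(q) = q}, equipped with the order induced from ℚ, is order-isomorphic to X. -/

import Mathlib

section aux

variable {X : Type*} [LinearOrder X]

lemma lex_le_iff {a c : X} {b d : ℚ} :
    toLex (a, b) ≤ toLex (c, d) ↔ a < c ∨ a = c ∧ b ≤ d := Prod.Lex.le_iff

lemma lex_lt_iff {a c : X} {b d : ℚ} :
    toLex (a, b) < toLex (c, d) ↔ a < c ∨ a = c ∧ b < d := Prod.Lex.lt_iff

noncomputable def psiAux (X : Type*) [LinearOrder X] : Lex (X × ℚ) ≃o Lex (X × ℚ) where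
  toFun p := toLex ((ofLex p).1, 2 * (ofLex p).2)
  invFun p := toLex ((ofLex p).1, (ofLex p).2 / 2)
  left_inv p := by
    have h : (2 : ℚ) * (ofLex p).2 / 2 = (ofLex p).2 := by ring
    simp only [ofLex_toLex, h, Prod.mk.eta, toLex_ofLex]
  right_inv p := by
    have h : (2 : ℚ) * ((ofLex p).2 / 2) = (ofLex p).2 := by ring
    simp only [ofLex_toLex, h, Prod.mk.eta, toLex_ofLex]
  map_rel_iff' := by
    rintro ⟨a, b⟩ ⟨c, d⟩
    show toLex (a, 2 * b) ≤ toLex (c, 2 * d) ↔ toLex (a, b) ≤ toLex (c, d)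
    rw [lex_le_iff, lex_le_iff]
    constructor
    · rintro (h | ⟨h1, h2⟩)
      · exact Or.inl h
      · exact Or.inr ⟨h1, by linarith⟩
    · rintro (h | ⟨h1, h2⟩)
      · exact Or.inl h
      · exact Or.inr ⟨h1, by linarith⟩

instance : DenselyOrdered (Lex (X × ℚ)) := by
  constructor
  rintro ⟨a, b⟩ ⟨c, d⟩ h
  have h' : toLex (a, b) < toLex (c, d) := h
  rcases lex_lt_iff.mp h' with h | ⟨h1, h2⟩
  · exact ⟨toLex (a, b + 1), lex_lt_iff.mpr (Or.inr ⟨rfl, by linarith⟩),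
      lex_lt_iff.mpr (Or.inl h)⟩
  · obtain ⟨m, hm1, hm2⟩ := exists_between h2
    exact ⟨toLex (a, m), lex_lt_iff.mpr (Or.inr ⟨rfl, hm1⟩),
      lex_lt_iff.mpr (Or.inr ⟨h1, hm2⟩)⟩

instance : NoMaxOrder (Lex (X × ℚ)) := by
  constructor
  rintro ⟨a, b⟩
  exact ⟨toLex (a, b + 1), lex_lt_iff.mpr (Or.inr ⟨rfl, by linarith⟩)⟩

instance : NoMinOrder (Lex (X × ℚ)) := by
  constructor
  rintro ⟨a, b⟩
  exact ⟨toLex (a, b - 1), lex_lt_iff.mpr (Or.inr ⟨rfl, by linarith⟩)⟩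

instance [Countable X] : Countable (Lex (X × ℚ)) := inferInstanceAs (Countable (X × ℚ))

end aux

/-- For every countable linear order `X` there is an order automorphism
`φ` of `ℚ` whose fixed-point set, with the induced order, is order-isomorphic to `X`. -/
theorem stmt_3 (X : Type*) [LinearOrder X] [Countable X] :
    ∃ φ : ℚ ≃o ℚ, Nonempty ({q : ℚ // φ q = q} ≃o X) := by
  by_cases hX : Nonempty X
  · have : Nonempty (Lex (X × ℚ)) := inferInstanceAs (Nonempty (X × ℚ))
    obtain ⟨e⟩ : Nonempty (Lex (X × ℚ) ≃o ℚ) := Order.iso_of_countable_dense _ _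
    refine ⟨(e.symm.trans (psiAux X)).trans e, ⟨?_⟩⟩
    have key : ∀ q : ℚ, ((e.symm.trans (psiAux X)).trans e) q = q ↔
        (ofLex (e.symm q)).2 = 0 := by
      intro q
      rw [OrderIso.trans_apply, OrderIso.trans_apply]
      constructor
      · intro h
        have h2 : psiAux X (e.symm q) = e.symm q := by
          have := congrArg e.symm h
          simpa using this
        have h3 : (2 : ℚ) * (ofLex (e.symm q)).2 = (ofLex (e.symm q)).2 := by
          have := congrArg (fun p => (ofLex p).2) h2
          simpa [psiAux] using this
        linarith
      · intro h
        have h2 : psiAux X (e.symm q) = e.symm q := by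
          show toLex ((ofLex (e.symm q)).1, 2 * (ofLex (e.symm q)).2) = e.symm q
          have h4 : (2 : ℚ) * (ofLex (e.symm q)).2 = (ofLex (e.symm q)).2 := by
            rw [h]; ring
          rw [h4]
          simp only [Prod.mk.eta, toLex_ofLex]
        rw [h2]; simp
    refine ⟨Equiv.ofBijective (fun q => (ofLex (e.symm q.1)).1) ⟨?_, ?_⟩, ?_⟩
    · rintro ⟨q, hq⟩ ⟨q', hq'⟩ h
      simp only at h
      have hz := (key q).mp hq
      have hz' := (key q').mp hq'
      have heq : ofLex (e.symm q) = ofLex (e.symm q') := Prod.ext h (hz.trans hz'.symm)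
      have heq2 : e.symm q = e.symm q' := heq
      exact Subtype.ext (by simpa using congrArg e heq2)
    · intro x
      refine ⟨⟨e (toLex (x, 0)), (key _).mpr ?_⟩, ?_⟩
      · simp
      · simp
    · rintro ⟨q, hq⟩ ⟨q', hq'⟩
      simp only [Equiv.ofBijective_apply, Subtype.mk_le_mk]
      have hz := (key q).mp hq
      have hz' := (key q').mp hq'
      rw [← e.symm.le_iff_le]
      have hq1 : e.symm q = toLex ((ofLex (e.symm q)).1, (ofLex (e.symm q)).2) := by
        simp only [Prod.mk.eta, toLex_ofLex]
      have hq2 : e.symm q' = toLex ((ofLex (e.symm q')).1, (ofLex (e.symm q')).2) := by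
        simp only [Prod.mk.eta, toLex_ofLex]
      rw [hq1, hq2, hz, hz', lex_le_iff]
      constructor
      · intro h
        rcases lt_or_eq_of_le h with h | h
        · exact Or.inl h
        · exact Or.inr ⟨h, le_refl 0⟩
      · rintro (h | ⟨h1, _⟩)
        · exact h.le
        · exact h1.le
  · have hem : IsEmpty X := not_nonempty_iff.mp hX
    refine ⟨(OrderIso.addRight 1 : ℚ ≃o ℚ), ⟨?_⟩⟩
    have he : IsEmpty {q : ℚ // (OrderIso.addRight (1:ℚ)) q = q} := by
      constructor
      rintro ⟨q, hq⟩
      simp [OrderIso.addRight] at hq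
      have : q + 1 = q := hq
      linarith
    exact ⟨Equiv.equivOfIsEmpty _ _, fun {a b} => he.elim a⟩
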